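/- Let φ(d, ḋ) = σ₀ + d_minⁿ - dⁿ - k·ḋ on [d_min, d_max] × [ḋ_min, ḋ_max] with 0 < d_min ≤ d_max, k > 0, and 0 < n < 1. Then φ is Lipschitz with respect to the 1-norm with constant max{n·d_min^{n-1}, k}. -/
import Mathlib

theorem rpow_sub_le_aux {dmin n : ℝ} (hdmin : 0 < dmin) (hn0 : 0 < n) (hn1 : n < 1)
    {x y : ℝ} (hx : dmin ≤ x) (hy : dmin ≤ y) :
    |x ^ n - y ^ n| ≤ n * dmin ^ (n - 1) * |x - y| := by
  have h := Convex.norm_image_sub_le_of_norm_hasDerivWithin_le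
    (f := fun t : ℝ => t ^ n) (f' := fun t : ℝ => n * t ^ (n - 1))
    (s := Set.Ici dmin) (C := n * dmin ^ (n - 1))
    (fun t ht => by
      have : HasDerivAt (fun t : ℝ => t ^ n) (n * t ^ (n - 1)) t := by
        have := Real.hasDerivAt_rpow_const (x := t) (p := n) (Or.inl (hdmin.trans_le ht).ne')
        simpa [mul_comm] using this
      exact this.hasDerivWithinAt)
    (fun t ht => by
      have ht' : dmin ≤ t := ht
      have hb : t ^ (n - 1) ≤ dmin ^ (n - 1) :=
        Real.rpow_le_rpow_of_nonpos hdmin ht' (by linarith)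
      have h0 : (0:ℝ) ≤ t ^ (n - 1) := Real.rpow_nonneg (by linarith [hdmin.le, ht']) _
      rw [Real.norm_eq_abs, abs_of_nonneg (by positivity)]
      exact mul_le_mul_of_nonneg_left hb hn0.le)
    (convex_Ici dmin) hy hx
  simpa [Real.norm_eq_abs] using h

theorem safety_index_lipschitz_n_lt_one
    (dmin dmax dotmin dotmax k σ₀ n : ℝ)
    (hdmin : 0 < dmin) (hdd : dmin ≤ dmax) (hk : 0 < k) (hσ : 0 < σ₀)
    (hn0 : 0 < n) (hn1 : n < 1) :
    ∀ d ∈ Set.Icc dmin dmax, ∀ ddot ∈ Set.Icc dotmin dotmax,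
    ∀ d' ∈ Set.Icc dmin dmax, ∀ ddot' ∈ Set.Icc dotmin dotmax,
      |(σ₀ + dmin ^ n - d ^ n - k * ddot) - (σ₀ + dmin ^ n - d' ^ n - k * ddot')| ≤
        max (n * dmin ^ (n - 1)) k * (|d - d'| + |ddot - ddot'|) := by
  intro d hd ddot _ d' hd' ddot' _
  have h1 : |d ^ n - d' ^ n| ≤ n * dmin ^ (n - 1) * |d - d'| :=
    rpow_sub_le_aux hdmin hn0 hn1 hd.1 hd'.1
  have h2 : |k * ddot - k * ddot'| = k * |ddot - ddot'| := by
    rw [← mul_sub, abs_mul, abs_of_pos hk]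
  set M := max (n * dmin ^ (n - 1)) k with hM
  have hM1 : n * dmin ^ (n - 1) ≤ M := le_max_left _ _
  have hM2 : k ≤ M := le_max_right _ _
  have key : (σ₀ + dmin ^ n - d ^ n - k * ddot) - (σ₀ + dmin ^ n - d' ^ n - k * ddot')
      = (d' ^ n - d ^ n) + (k * ddot' - k * ddot) := by ring
  rw [key]
  calc |(d' ^ n - d ^ n) + (k * ddot' - k * ddot)|
      ≤ |d' ^ n - d ^ n| + |k * ddot' - k * ddot| := abs_add_le _ _
    _ ≤ n * dmin ^ (n - 1) * |d - d'| + k * |ddot - ddot'| := by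
        rw [abs_sub_comm (d' ^ n), abs_sub_comm (k * ddot')]
        exact add_le_add h1 h2.le
    _ ≤ M * |d - d'| + M * |ddot - ddot'| := by
        gcongr
    _ = M * (|d - d'| + |ddot - ddot'|) := by ring
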